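/- Let $p \geq 2$, $\delta \in [0,1]$ and define $G_{p,\delta}(x,y) = |y|^2[(|x|+|y|)^\delta(1+|x|+|y|)^{1-\delta}]^{p-2}$ for $x, y \in \mathbb{R}^d$. Then $G_{p,\delta}$ is convex in its second argument: for fixed $x$ and all $y_1, y_2 \in \mathbb{R}^d$, $t \in [0,1]$, $G_{p,\delta}(x, ty_1 + (1-t)y_2) \leq t\,G_{p,\delta}(x, y_1) + (1-t)\,G_{p,\delta}(x, y_2)$. -/

import Mathlib

open Set Real

lemma contPow (a α : ℝ) (hα : 0 ≤ α) : Continuous (fun s : ℝ => (a + s) ^ α) := by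
  refine continuous_iff_continuousAt.2 fun x => ?_
  exact (Real.continuousAt_rpow_const _ _ (Or.inr hα)).comp (by fun_prop)

lemma key_mono (a α : ℝ) (ha : 0 ≤ a) (hα : 0 ≤ α) {s₁ s₂ : ℝ}
    (h₁ : 0 < s₁) (h : s₁ ≤ s₂) :
    s₁ ^ 2 * (a + s₁) ^ (α - 1) ≤ s₂ ^ 2 * (a + s₂) ^ (α - 1) := by
  have h₂ : 0 < s₂ := h₁.trans_le h
  have hA₁ : 0 < a + s₁ := by linarith
  have hA₂ : 0 < a + s₂ := by linarith
  rcases le_or_gt 1 α with h1 | h1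
  · have hr := Real.rpow_le_rpow hA₁.le (by linarith : a + s₁ ≤ a + s₂)
      (by linarith : (0:ℝ) ≤ α - 1)
    have hsq : s₁ ^ 2 ≤ s₂ ^ 2 := by nlinarith
    exact mul_le_mul hsq hr (Real.rpow_nonneg hA₁.le _) (by positivity)
  · have e : ∀ s : ℝ, 0 < s → s ^ 2 * (a + s) ^ (α - 1)
        = s ^ (1 + α) * (s / (a + s)) ^ (1 - α) := by
      intro s hs
      have hA : 0 < a + s := by linarith
      rw [Real.div_rpow hs.le hA.le, div_eq_mul_inv, ← Real.rpow_neg hA.le,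
        ← Real.rpow_natCast s 2]
      have : (s : ℝ) ^ ((2:ℕ) : ℝ) = s ^ (1 + α) * s ^ (1 - α) := by
        rw [← Real.rpow_add hs]; norm_num
      rw [this]
      ring_nf
    rw [e s₁ h₁, e s₂ h₂]
    have hb : s₁ / (a + s₁) ≤ s₂ / (a + s₂) := by
      rw [div_le_div_iff₀ hA₁ hA₂]; nlinarith
    have h1' : s₁ ^ (1 + α) ≤ s₂ ^ (1 + α) :=
      Real.rpow_le_rpow h₁.le h (by linarith)
    have h2' : (s₁ / (a + s₁)) ^ (1 - α) ≤ (s₂ / (a + s₂)) ^ (1 - α) :=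
      Real.rpow_le_rpow (by positivity) hb (by linarith)
    exact mul_le_mul h1' h2' (by positivity) (by positivity)

lemma hasDerivG (a b α β : ℝ) {s : ℝ} (hA : 0 < a + s) (hB : 0 < b + s) :
    HasDerivAt (fun s : ℝ => s ^ 2 * (a + s) ^ α * (b + s) ^ β)
      (2 * s * ((a + s) ^ α * (b + s) ^ β)
        + α * (s ^ 2 * (a + s) ^ (α - 1)) * (b + s) ^ β
        + β * (s ^ 2 * (b + s) ^ (β - 1)) * (a + s) ^ α) s := by
  have h1 : HasDerivAt (fun s : ℝ => (a + s) ^ α) (α * (a + s) ^ (α - 1)) s := by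
    have := (Real.hasDerivAt_rpow_const (x := a + s) (p := α) (Or.inl hA.ne')).comp s
      ((hasDerivAt_id s).const_add a)
    simpa [Function.comp_def] using this
  have h2 : HasDerivAt (fun s : ℝ => (b + s) ^ β) (β * (b + s) ^ (β - 1)) s := by
    have := (Real.hasDerivAt_rpow_const (x := b + s) (p := β) (Or.inl hB.ne')).comp s
      ((hasDerivAt_id s).const_add b)
    simpa [Function.comp_def] using this
  have h3 : HasDerivAt (fun s : ℝ => s ^ 2) (2 * s) s := by
    simpa using hasDerivAt_pow 2 s
  have := (h3.mul h1).mul h2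
  refine this.congr_deriv ?_
  simp only [Pi.mul_apply]
  ring

lemma gmono (a b α β : ℝ) (ha : 0 ≤ a) (hb : 0 ≤ b) (hα : 0 ≤ α) (hβ : 0 ≤ β) :
    MonotoneOn (fun s : ℝ => s ^ 2 * (a + s) ^ α * (b + s) ^ β) (Ici 0) := by
  intro s₁ h₁ s₂ h₂ h
  simp only [mem_Ici] at h₁ h₂
  have hA₁ : (0:ℝ) ≤ a + s₁ := by linarith
  have hB₁ : (0:ℝ) ≤ b + s₁ := by linarith
  dsimp only
  have e1 : s₁ ^ 2 * (a + s₁) ^ α ≤ s₂ ^ 2 * (a + s₂) ^ α :=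
    mul_le_mul (by nlinarith) (Real.rpow_le_rpow hA₁ (by linarith) hα)
      (Real.rpow_nonneg hA₁ _) (by positivity)
  exact mul_le_mul e1 (Real.rpow_le_rpow hB₁ (by linarith) hβ)
    (Real.rpow_nonneg hB₁ _) (by positivity)

lemma gconv (a b α β : ℝ) (ha : 0 ≤ a) (hb : 0 ≤ b) (hα : 0 ≤ α) (hβ : 0 ≤ β) :
    ConvexOn ℝ (Ici 0) (fun s : ℝ => s ^ 2 * (a + s) ^ α * (b + s) ^ β) := by
  set F : ℝ → ℝ := fun s =>
      2 * s * ((a + s) ^ α * (b + s) ^ β)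
        + α * (s ^ 2 * (a + s) ^ (α - 1)) * (b + s) ^ β
        + β * (s ^ 2 * (b + s) ^ (β - 1)) * (a + s) ^ α with hF
  have hd : ∀ s ∈ interior (Ici (0:ℝ)),
      HasDerivAt (fun s : ℝ => s ^ 2 * (a + s) ^ α * (b + s) ^ β) (F s) s := by
    intro s hs
    rw [interior_Ici] at hs
    have hs' : 0 < s := hs
    exact hasDerivG a b α β (by linarith) (by linarith)
  refine MonotoneOn.convexOn_of_deriv (convex_Ici 0) ?_ ?_ ?_
  · exact (((continuous_pow 2).mul (contPow a α hα)).mul (contPow b β hβ)).continuousOn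
  · exact fun s hs => ((hd s hs).differentiableAt).differentiableWithinAt
  · have heq : EqOn (deriv (fun s : ℝ => s ^ 2 * (a + s) ^ α * (b + s) ^ β)) F
        (interior (Ici (0:ℝ))) := fun s hs => (hd s hs).deriv
    have hFmono : MonotoneOn F (interior (Ici (0:ℝ))) := by
      rw [interior_Ici]
      intro s₁ h₁ s₂ h₂ h
      simp only [mem_Ioi] at h₁ h₂
      have hA₁ : (0:ℝ) < a + s₁ := by linarith
      have hB₁ : (0:ℝ) < b + s₁ := by linarith
      have hA₂ : (0:ℝ) < a + s₂ := by linarith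
      have hB₂ : (0:ℝ) < b + s₂ := by linarith
      have hAB : (a + s₁) ^ α * (b + s₁) ^ β ≤ (a + s₂) ^ α * (b + s₂) ^ β :=
        mul_le_mul (Real.rpow_le_rpow hA₁.le (by linarith) hα)
          (Real.rpow_le_rpow hB₁.le (by linarith) hβ)
          (Real.rpow_nonneg hB₁.le _) (Real.rpow_nonneg hA₂.le _)
      have t1 : 2 * s₁ * ((a + s₁) ^ α * (b + s₁) ^ β)
          ≤ 2 * s₂ * ((a + s₂) ^ α * (b + s₂) ^ β) :=
        mul_le_mul (by linarith) hAB (by positivity) (by linarith)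
      have t2 : α * (s₁ ^ 2 * (a + s₁) ^ (α - 1)) * (b + s₁) ^ β
          ≤ α * (s₂ ^ 2 * (a + s₂) ^ (α - 1)) * (b + s₂) ^ β := by
        have k := key_mono a α ha hα h₁ h
        have := Real.rpow_le_rpow hB₁.le (by linarith : b + s₁ ≤ b + s₂) hβ
        have hn1 : 0 ≤ s₁ ^ 2 * (a + s₁) ^ (α - 1) := by positivity
        have hn2 : 0 ≤ s₂ ^ 2 * (a + s₂) ^ (α - 1) := by positivity
        exact mul_le_mul (mul_le_mul_of_nonneg_left k hα) this
          (Real.rpow_nonneg hB₁.le _) (by positivity)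
      have t3 : β * (s₁ ^ 2 * (b + s₁) ^ (β - 1)) * (a + s₁) ^ α
          ≤ β * (s₂ ^ 2 * (b + s₂) ^ (β - 1)) * (a + s₂) ^ α := by
        have k := key_mono b β hb hβ h₁ h
        have := Real.rpow_le_rpow hA₁.le (by linarith : a + s₁ ≤ a + s₂) hα
        exact mul_le_mul (mul_le_mul_of_nonneg_left k hβ) this
          (Real.rpow_nonneg hA₁.le _) (by positivity)
      simp only [hF]
      linarith
    exact hFmono.congr heq.symm

/-- The weight function `G_{p,δ}(x,y) = |y|² [(|x|+|y|)^δ (1+|x|+|y|)^{1-δ}]^{p-2}`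
(equal to `0` when `|x|+|y| = 0`). -/
noncomputable def Gpd (p δ : ℝ) {d : ℕ} (x y : EuclideanSpace ℝ (Fin d)) : ℝ :=
  ‖y‖ ^ 2 * ((‖x‖ + ‖y‖) ^ δ * (1 + ‖x‖ + ‖y‖) ^ (1 - δ)) ^ (p - 2)

/-- `G_{p,δ}` is convex in its second argument for `p ≥ 2`. -/
theorem Gpd_convex_second_argument (p δ : ℝ) (hp : 2 ≤ p) (hδ : δ ∈ Set.Icc (0:ℝ) 1)
    (d : ℕ) (x y₁ y₂ : EuclideanSpace ℝ (Fin d)) (t : ℝ) (ht : t ∈ Set.Icc (0:ℝ) 1) :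
    Gpd p δ x (t • y₁ + (1 - t) • y₂) ≤ t * Gpd p δ x y₁ + (1 - t) * Gpd p δ x y₂ := by
  obtain ⟨ht0, ht1⟩ := ht
  obtain ⟨hδ0, hδ1⟩ := hδ
  set a := ‖x‖ with haa
  have ha : 0 ≤ a := norm_nonneg x
  set g : ℝ → ℝ := fun s =>
    s ^ 2 * (a + s) ^ (δ * (p - 2)) * ((1 + a) + s) ^ ((1 - δ) * (p - 2)) with hg
  have hα : 0 ≤ δ * (p - 2) := mul_nonneg hδ0 (by linarith)
  have hβ : 0 ≤ (1 - δ) * (p - 2) := mul_nonneg (by linarith) (by linarith)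
  have hG : ∀ y : EuclideanSpace ℝ (Fin d), Gpd p δ x y = g ‖y‖ := by
    intro y
    have h1 : (0:ℝ) ≤ a + ‖y‖ := by positivity
    have h2 : (0:ℝ) ≤ 1 + a + ‖y‖ := by positivity
    rw [Gpd, hg]
    rw [Real.mul_rpow (Real.rpow_nonneg h1 _) (Real.rpow_nonneg h2 _),
      ← Real.rpow_mul h1, ← Real.rpow_mul h2]
    ring_nf
  have hconv := gconv a (1 + a) _ _ ha (by linarith) hα hβ
  have hmono := gmono a (1 + a) _ _ ha (by linarith) hα hβ
  have hnorm : ‖t • y₁ + (1 - t) • y₂‖ ≤ t * ‖y₁‖ + (1 - t) * ‖y₂‖ := by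
    refine (norm_add_le _ _).trans ?_
    rw [norm_smul, norm_smul, Real.norm_eq_abs, Real.norm_eq_abs,
      abs_of_nonneg ht0, abs_of_nonneg (by linarith : (0:ℝ) ≤ 1 - t)]
  calc Gpd p δ x (t • y₁ + (1 - t) • y₂) = g ‖t • y₁ + (1 - t) • y₂‖ := hG _
    _ ≤ g (t * ‖y₁‖ + (1 - t) * ‖y₂‖) :=
        hmono (mem_Ici.2 (norm_nonneg _)) (mem_Ici.2 (add_nonneg (mul_nonneg ht0 (norm_nonneg _)) (mul_nonneg (by linarith) (norm_nonneg _)))) hnorm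
    _ ≤ t * g ‖y₁‖ + (1 - t) * g ‖y₂‖ := by
        have := hconv.2 (mem_Ici.2 (norm_nonneg y₁)) (mem_Ici.2 (norm_nonneg y₂))
          ht0 (by linarith : (0:ℝ) ≤ 1 - t) (by ring)
        simpa using this
    _ = t * Gpd p δ x y₁ + (1 - t) * Gpd p δ x y₂ := by rw [hG, hG]
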